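/- Let M ≥ 1 and let P ∈ ℂ^{M×M} be a unitary matrix. There exists a matrix A ∈ ℂ^{M×M} such that AP − PA is invertible if and only if no eigenvalue of P has algebraic multiplicity exceeding ⌊M/2⌋. -/

import Mathlib

open Matrix Polynomial Module Finset
open Fin.NatCast

namespace CommProof


lemma shift_ne {n k : ℕ} (hk1 : 1 ≤ k) (hk2 : 2 * k ≤ n) (u : Fin n → ℕ) (hu : Monotone u)
    (hfib : ∀ v, (Finset.univ.filter (fun i => u i = v)).card ≤ k) (j : Fin n) :
    haveI : NeZero n := ⟨by omega⟩
    u (j + (k : Fin n)) ≠ u j := by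
  haveI : NeZero n := ⟨by omega⟩
  have hkn : k < n := by omega
  have hkv : ((k : Fin n)).val = k := Fin.val_cast_of_lt hkn
  set j' := j + (k : Fin n) with hj'def
  have hj' : j'.val = (j.val + k) % n := by
    rw [hj'def, Fin.add_def, hkv]
  intro heq
  have hjlt := j.isLt
  by_cases hcase : j.val + k < n
  · have h1 : j'.val = j.val + k := by rw [hj', Nat.mod_eq_of_lt hcase]
    have hle : j ≤ j' := by rw [Fin.le_def]; omega
    have hsub : Finset.Icc j j' ⊆ Finset.univ.filter (fun i => u i = u j) := by
      intro l hl
      rw [Finset.mem_Icc] at hl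
      simp only [Finset.mem_filter, Finset.mem_univ, true_and]
      refine le_antisymm ?_ (hu hl.1)
      rw [← heq]; exact hu hl.2
    have hcard : (Finset.Icc j j').card = k + 1 := by
      rw [Fin.card_Icc]
      omega
    have := (Finset.card_le_card hsub).trans (hfib (u j))
    omega
  · have h1 : j'.val = j.val + k - n := by
      rw [hj', Nat.mod_eq_sub_mod (by omega), Nat.mod_eq_of_lt (by omega)]
    have hle : j' ≤ j := by rw [Fin.le_def]; omega
    have hsub : Finset.Icc j' j ⊆ Finset.univ.filter (fun i => u i = u j) := by
      intro l hl
      rw [Finset.mem_Icc] at hl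
      simp only [Finset.mem_filter, Finset.mem_univ, true_and]
      refine le_antisymm (hu hl.2) ?_
      rw [← heq]; exact hu hl.1
    have hcard : (Finset.Icc j' j).card = j.val + 1 - j'.val := by
      rw [Fin.card_Icc]
    have := (Finset.card_le_card hsub).trans (hfib (u j))
    omega



lemma exists_perm_ne {n : ℕ} (hn : 1 ≤ n) (d : Fin n → ℂ)
    (hfib : ∀ v : ℂ, (Finset.univ.filter (fun i => d i = v)).card ≤ n / 2) :
    ∃ σ : Equiv.Perm (Fin n), ∀ i, d (σ i) ≠ d i := by
  classical
  have h2 : 2 ≤ n := by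
    rcases Nat.lt_or_ge n 2 with h | h
    · exfalso
      have hn1 : n = 1 := by omega
      subst hn1
      have := hfib (d 0)
      rw [show (Finset.univ.filter (fun i : Fin 1 => d i = d 0)) = Finset.univ by
        ext i; simp [Subsingleton.elim i 0]] at this
      exact absurd this (by simp)
    · exact h
  haveI : NeZero n := ⟨by omega⟩
  set k := n / 2 with hk
  set L := (Finset.univ.image d).toList with hL
  set t : Fin n → ℕ := fun i => L.idxOf (d i) with ht
  have hmem : ∀ i, d i ∈ L := fun i => by
    simp [hL, Finset.mem_toList]
  have htiff : ∀ i j, t i = t j ↔ d i = d j := fun i j =>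
    List.idxOf_inj (hmem i)
  set τ := Tuple.sort t with hτ
  set u := t ∘ τ with hu
  have humono : Monotone u := Tuple.monotone_sort t
  -- fibers of t have the same card as fibers of d-values
  have htfib : ∀ v : ℕ, (Finset.univ.filter (fun i => t i = v)).card ≤ k := by
    intro v
    by_cases hex : ∃ i0, t i0 = v
    · obtain ⟨i0, hi0⟩ := hex
      have : (Finset.univ.filter (fun i => t i = v)) =
          (Finset.univ.filter (fun i => d i = d i0)) := by
        ext i
        simp only [Finset.mem_filter, Finset.mem_univ, true_and]
        rw [← hi0, htiff]
      rw [this]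
      exact hfib (d i0)
    · push_neg at hex
      rw [Finset.filter_false_of_mem (fun i _ => hex i)]
      simp [Nat.zero_le]
  have hufib : ∀ v : ℕ, (Finset.univ.filter (fun i => u i = v)).card ≤ k := by
    intro v
    have : (Finset.univ.filter (fun i => u i = v)) =
        (Finset.univ.filter (fun i => t i = v)).map ⟨τ.symm, τ.symm.injective⟩ := by
      ext i
      simp only [Finset.mem_filter, Finset.mem_univ, true_and, Finset.mem_map,
        Function.Embedding.coeFn_mk]
      constructor
      · intro h
        exact ⟨τ i, by simpa [hu] using h, by simp⟩
      · rintro ⟨l, hl, rfl⟩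
        simpa [hu] using hl
    rw [this, Finset.card_map]
    exact htfib v
  refine ⟨(τ.symm.trans (Equiv.addRight (k : Fin n))).trans τ, fun i => ?_⟩
  simp only [Equiv.trans_apply, Equiv.coe_addRight]
  intro hcon
  have key := shift_ne (k := k) (by omega) (by omega) u humono hufib (τ.symm i)
  apply key
  have : d (τ (τ.symm i + (k : Fin n))) = d (τ (τ.symm i)) := by
    simpa using hcon
  have := (htiff _ _).mpr this
  simpa [hu] using this



lemma charpoly_diag {n : ℕ} (d : Fin n → ℂ) :
    (Matrix.diagonal d).charpoly = ∏ i, (X - C (d i)) := by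
  classical
  rw [Matrix.charpoly]
  have h : (Matrix.diagonal d).charmatrix = Matrix.diagonal (fun i => (X : ℂ[X]) - C (d i)) := by
    ext i j
    by_cases hij : i = j
    · subst hij
      simp [Matrix.charmatrix_apply_eq]
    · simp [Matrix.charmatrix_apply_ne _ _ _ hij, Matrix.diagonal_apply_ne _ hij,
        Matrix.diagonal_apply_ne d hij]
  rw [h, Matrix.det_diagonal]

lemma rootMult_diag {n : ℕ} (d : Fin n → ℂ) (lam : ℂ) :
    (Matrix.diagonal d).charpoly.rootMultiplicity lam =
      (Finset.univ.filter (fun i => d i = lam)).card := by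
  classical
  rw [charpoly_diag]
  have h1 : (∏ i, ((X : ℂ[X]) - C (d i))) =
      ((Finset.univ.val.map d).map (fun a => (X : ℂ[X]) - C a)).prod := by
    rw [Multiset.map_map]
    rfl
  rw [h1, ← Polynomial.count_roots, Polynomial.roots_multiset_prod_X_sub_C,
    Multiset.count_map]
  have h2 : (Finset.univ.filter (fun i => d i = lam)).card =
      Multiset.card (Multiset.filter (fun a => lam = d a) Finset.univ.val) := by
    rw [Finset.card, Finset.filter_val]
    congr 1
    apply Multiset.filter_congr
    intro x _
    exact eq_comm
  rw [h2]



lemma forward_diag {n : ℕ} (d : Fin n → ℂ) (B : Matrix (Fin n) (Fin n) ℂ)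
    (hB : IsUnit (B * Matrix.diagonal d - Matrix.diagonal d * B)) (lam : ℂ) :
    (Finset.univ.filter (fun i => d i = lam)).card ≤ n / 2 := by
  classical
  by_contra hlt
  push_neg at hlt
  set F := Finset.univ.filter (fun i : Fin n => d i = lam) with hF
  set Cm := B * Matrix.diagonal d - Matrix.diagonal d * B with hCm
  have hCentry : ∀ i j, Cm i j = B i j * (d j - d i) := by
    intro i j
    simp only [hCm, Matrix.sub_apply, Matrix.mul_diagonal, Matrix.diagonal_mul]
    ring
  have hC0 : ∀ i j, i ∈ F → j ∈ F → Cm i j = 0 := by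
    intro i j hi hj
    rw [hCentry]
    have hdi : d i = lam := (Finset.mem_filter.mp hi).2
    have hdj : d j = lam := (Finset.mem_filter.mp hj).2
    rw [hdi, hdj, sub_self, mul_zero]
  set φ : (↥F → ℂ) →ₗ[ℂ] (↥(Fᶜ) → ℂ) :=
    { toFun := fun x j => ∑ i : ↥F, x i * Cm i.val j.val
      map_add' := by
        intro x y
        funext j
        simp [add_mul, Finset.sum_add_distrib]
      map_smul' := by
        intro c x
        funext j
        simp [Finset.mul_sum, mul_assoc] } with hφ
  have hinj : Function.Injective φ := by
    rw [injective_iff_map_eq_zero]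
    intro x hx
    set y : Fin n → ℂ := fun i => if h : i ∈ F then x ⟨i, h⟩ else 0 with hy
    have hsplit : ∀ j : Fin n, ∑ i, y i * Cm i j = ∑ i : ↥F, x i * Cm i.val j := by
      intro j
      rw [← Finset.sum_subset (Finset.subset_univ F)
        (by intro i _ hi; rw [hy]; simp [dif_neg hi])]
      rw [← Finset.sum_attach F (fun i => y i * Cm i j)]
      apply Finset.sum_congr rfl
      intro i _
      rw [hy]
      simp [dif_pos i.2]
    have hvec : Matrix.vecMul y Cm = 0 := by
      funext j
      show Matrix.vecMul y Cm j = 0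
      rw [Matrix.vecMul, dotProduct]
      by_cases hj : j ∈ F
      · apply Finset.sum_eq_zero
        intro i _
        by_cases hi : i ∈ F
        · rw [hC0 i j hi hj, mul_zero]
        · rw [hy]; simp [dif_neg hi]
      · rw [hsplit j]
        have := congrFun hx ⟨j, Finset.mem_compl.mpr hj⟩
        simpa [hφ] using this
    have hy0 : y = 0 := by
      have hdet : IsUnit Cm.det := (Matrix.isUnit_iff_isUnit_det Cm).mp hB
      have h1 := congrArg (fun v => Matrix.vecMul v Cm⁻¹) hvec
      simpa [Matrix.vecMul_vecMul, Matrix.mul_nonsing_inv Cm hdet] using h1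
    funext i
    have := congrFun hy0 i.val
    rw [hy] at this
    simpa [dif_pos i.2] using this
  have hle := LinearMap.finrank_le_finrank_of_injective hinj
  rw [Module.finrank_pi, Module.finrank_pi, Fintype.card_coe, Fintype.card_coe,
    Finset.card_compl] at hle
  rw [Fintype.card_fin] at hle
  have hFF : (Finset.univ.filter (fun i : Fin n => d i = lam)).card = F.card := rfl
  rw [hFF] at hle hlt
  have hcard : F.card ≤ n := by
    have := Finset.card_le_univ F
    simpa using this
  omega




lemma reverse_diag {n : ℕ} (hn : 1 ≤ n) (d : Fin n → ℂ)
    (h : ∀ lam : ℂ, (Finset.univ.filter (fun i => d i = lam)).card ≤ n / 2) :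
    ∃ B : Matrix (Fin n) (Fin n) ℂ,
      IsUnit (B * Matrix.diagonal d - Matrix.diagonal d * B) := by
  classical
  obtain ⟨σ, hσ⟩ := exists_perm_ne hn d h
  set B : Matrix (Fin n) (Fin n) ℂ :=
    Matrix.of (fun i j => if σ i = j then (d j - d i)⁻¹ else 0) with hB
  refine ⟨B, ?_⟩
  have hQ : B * Matrix.diagonal d - Matrix.diagonal d * B = σ.permMatrix ℂ := by
    ext i j
    simp only [Matrix.sub_apply, Matrix.mul_diagonal, Matrix.diagonal_mul, hB,
      Matrix.of_apply, Equiv.Perm.permMatrix, PEquiv.toMatrix_apply,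
      Equiv.toPEquiv_apply, Option.mem_def, Option.some.injEq]
    by_cases hij : σ i = j
    · subst hij
      have hne : d (σ i) - d i ≠ 0 := sub_ne_zero.mpr (hσ i)
      rw [if_pos rfl, if_pos rfl]
      field_simp
    · rw [if_neg hij, if_neg hij]
      simp
  rw [hQ]
  rw [Matrix.isUnit_iff_isUnit_det, Matrix.det_permutation]
  rcases Int.units_eq_one_or (Equiv.Perm.sign σ) with hs | hs <;> simp [hs]



local notation "⟪" x ", " y "⟫" => @inner ℂ _ _ x y

lemma normal_ker {V : Type*} [NormedAddCommGroup V] [InnerProductSpace ℂ V]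
    [FiniteDimensional ℂ V] (g : Module.End ℂ V)
    (hg : g * LinearMap.adjoint g = LinearMap.adjoint g * g) (x : V)
    (hx : g (g x) = 0) : g x = 0 := by
  set w := g x with hw
  have h1 : LinearMap.adjoint g w = 0 := by
    have hinner : ⟪LinearMap.adjoint g w, LinearMap.adjoint g w⟫ = 0 := by
      rw [LinearMap.adjoint_inner_left]
      have : g (LinearMap.adjoint g w) = 0 := by
        have e1 : g (LinearMap.adjoint g w) = (g * LinearMap.adjoint g) w := rfl
        rw [e1, hg]
        show LinearMap.adjoint g (g w) = 0
        rw [hx, map_zero]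
      rw [this, inner_zero_right]
    exact inner_self_eq_zero.mp hinner
  have h2 : ⟪w, w⟫ = 0 := by
    rw [hw]
    rw [← LinearMap.adjoint_inner_right]
    rw [← hw, h1, inner_zero_right]
  exact inner_self_eq_zero.mp h2

lemma normal_pow_ker {V : Type*} [NormedAddCommGroup V] [InnerProductSpace ℂ V]
    [FiniteDimensional ℂ V] (g : Module.End ℂ V)
    (hg : g * LinearMap.adjoint g = LinearMap.adjoint g * g) :
    ∀ (k : ℕ) (x : V), (g ^ k) x = 0 → g x = 0 := by
  intro k
  induction k with
  | zero =>
    intro x hx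
    simp only [pow_zero, Module.End.one_apply] at hx
    rw [hx, map_zero]
  | succ k ih =>
    intro x hx
    have h1 : (g ^ k) (g x) = 0 := by
      have : (g ^ (k + 1)) x = (g ^ k) (g x) := by
        rw [pow_succ]
        rfl
      rw [← this, hx]
    have h2 : g (g x) = 0 := ih (g x) h1
    exact normal_ker g hg x h2

lemma exists_eigenbasis {M : ℕ} (P : Matrix (Fin M) (Fin M) ℂ) (hP : P * Pᴴ = 1) :
    ∃ (b : Basis (Fin M) ℂ (EuclideanSpace ℂ (Fin M))) (d : Fin M → ℂ),
      ∀ i, Matrix.toEuclideanLin P (b i) = d i • b i := by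
  classical
  set V := EuclideanSpace ℂ (Fin M) with hV
  set f : Module.End ℂ V := Matrix.toEuclideanLin P with hf
  have hP' : Pᴴ * P = 1 := mul_eq_one_comm.mp hP
  have hadj : LinearMap.adjoint f = Matrix.toEuclideanLin Pᴴ :=
    (Matrix.toEuclideanLin_conjTranspose_eq_adjoint P).symm
  have hmul : ∀ A B : Matrix (Fin M) (Fin M) ℂ,
      Matrix.toEuclideanLin (A * B) =
        (Matrix.toEuclideanLin A : Module.End ℂ V) * Matrix.toEuclideanLin B := by
    intro A B
    rw [Matrix.toEuclideanLin_eq_toLin, Matrix.toLin_mul _ (PiLp.basisFun 2 ℂ (Fin M)) _]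
    rfl
  have hcomm : f * LinearMap.adjoint f = LinearMap.adjoint f * f := by
    rw [hadj, hf, ← hmul, ← hmul, hP, hP']
  -- normality of f - μ • 1
  have hnormal : ∀ μ : ℂ,
      (f - μ • 1) * LinearMap.adjoint (f - μ • 1) =
        LinearMap.adjoint (f - μ • 1) * (f - μ • 1) := by
    intro μ
    have hadjsub : LinearMap.adjoint (f - μ • 1) =
        LinearMap.adjoint f - (starRingEnd ℂ μ) • 1 := by
      rw [map_sub, map_smulₛₗ]
      have h1 : LinearMap.adjoint (1 : Module.End ℂ V) = 1 := by
        refine ((LinearMap.eq_adjoint_iff _ _).mpr ?_).symm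
        intro x y
        simp [Module.End.one_apply]
      rw [h1]
    rw [hadjsub]
    simp only [sub_mul, mul_sub, smul_mul_assoc, mul_smul_comm, one_mul, mul_one, smul_sub,
      smul_smul]
    rw [hcomm, mul_comm μ (starRingEnd ℂ μ)]
    abel
  -- eigenspaces span
  have htop : ⨆ μ : ℂ, f.eigenspace μ = ⊤ := by
    rw [eq_top_iff, ← Module.End.iSup_maxGenEigenspace_eq_top f]
    apply iSup_mono
    intro μ
    intro x hx
    rw [Module.End.mem_maxGenEigenspace] at hx
    obtain ⟨k, hk⟩ := hx
    have := normal_pow_ker (f - μ • 1) (hnormal μ) k x hk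
    rw [Module.End.mem_eigenspace_iff]
    simp only [LinearMap.sub_apply, LinearMap.smul_apply, Module.End.one_apply] at this
    exact sub_eq_zero.mp this
  -- internal direct sum of eigenspaces over the (finite) type of eigenvalues
  have hsub : ⨆ μ : f.Eigenvalues, f.eigenspace μ.val = ⊤ := by
    rw [eq_top_iff, ← htop]
    apply iSup_le
    intro μ
    by_cases h : f.HasUnifEigenvalue μ 1
    · exact le_iSup (fun ν : f.Eigenvalues => f.eigenspace ν.val) ⟨μ, h⟩
    · simp only [Module.End.HasUnifEigenvalue, not_not] at h
      exact le_of_eq_of_le h bot_le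
  have hind : iSupIndep (fun μ : f.Eigenvalues => f.eigenspace μ.val) :=
    (f.eigenspaces_iSupIndep).comp Subtype.val_injective
  have internal : DirectSum.IsInternal (fun μ : f.Eigenvalues => f.eigenspace μ.val) :=
    (DirectSum.isInternal_submodule_iff_iSupIndep_and_iSup_eq_top _).mpr ⟨hind, hsub⟩
  set b1 := internal.collectedBasis
    (fun μ : f.Eigenvalues => Module.finBasis ℂ (f.eigenspace μ.val)) with hb1
  have heig : ∀ a, f (b1 a) = (a.1 : ℂ) • b1 a := by
    intro a
    exact Module.End.mem_eigenspace_iff.mp (internal.collectedBasis_mem _ a)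
  have hcard : Fintype.card (Σ μ : f.Eigenvalues, Fin (finrank ℂ (f.eigenspace μ.val))) = M := by
    rw [← Module.finrank_eq_card_basis b1]
    exact finrank_euclideanSpace_fin
  set e := Fintype.equivFinOfCardEq hcard with he
  refine ⟨b1.reindex e, fun i => ((e.symm i).1.1 : ℂ), fun i => ?_⟩
  simp only [Module.Basis.reindex_apply]
  exact heig (e.symm i)




lemma one_dir {n : ℕ} (S S' Pm D : Matrix (Fin n) (Fin n) ℂ)
    (h1 : S * S' = 1) (h2 : S' * S = 1) (hPm : Pm = S * D * S') :
    (∃ B, IsUnit (B * D - D * B)) → ∃ A, IsUnit (A * Pm - Pm * A) := by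
  rintro ⟨B, hB⟩
  refine ⟨S * B * S', ?_⟩
  have key : S * B * S' * Pm - Pm * (S * B * S') = S * (B * D - D * B) * S' := by
    rw [hPm]
    have e1 : S * B * S' * (S * D * S') = S * (B * D) * S' := by
      calc S * B * S' * (S * D * S') = S * B * (S' * S) * (D * S') := by noncomm_ring
        _ = S * (B * D) * S' := by rw [h2]; noncomm_ring
    have e2 : S * D * S' * (S * B * S') = S * (D * B) * S' := by
      calc S * D * S' * (S * B * S') = S * D * (S' * S) * (B * S') := by noncomm_ring
        _ = S * (D * B) * S' := by rw [h2]; noncomm_ring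
    rw [e1, e2]
    noncomm_ring
  rw [key]
  have hS : IsUnit S := ⟨⟨S, S', h1, h2⟩, rfl⟩
  have hS' : IsUnit S' := ⟨⟨S', S, h2, h1⟩, rfl⟩
  exact (hS.mul hB).mul hS'

/-- main theorem -/
theorem main (M : ℕ) (hM : 1 ≤ M) (P : Matrix (Fin M) (Fin M) ℂ) (hP : P * Pᴴ = 1) :
    (∃ A : Matrix (Fin M) (Fin M) ℂ, IsUnit (A * P - P * A)) ↔
      ∀ lam : ℂ, (Matrix.charpoly P).rootMultiplicity lam ≤ M / 2 := by
  classical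
  obtain ⟨b, d, hbd⟩ := exists_eigenbasis P hP
  set b0 : Basis (Fin M) ℂ (EuclideanSpace ℂ (Fin M)) := PiLp.basisFun 2 ℂ (Fin M) with hb0
  set f : Module.End ℂ (EuclideanSpace ℂ (Fin M)) := Matrix.toEuclideanLin P with hf
  have hfP : LinearMap.toMatrix b0 b0 f = P := by
    rw [hf, Matrix.toEuclideanLin_eq_toLin, LinearMap.toMatrix_toLin]
  have hfD : LinearMap.toMatrix b b f = Matrix.diagonal d := by
    ext i j
    rw [LinearMap.toMatrix_apply, hbd j, _root_.map_smul, Basis.repr_self]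
    rw [Matrix.diagonal_apply]
    by_cases hij : i = j
    · subst hij; simp
    · simp [Finsupp.single_apply, hij, Ne.symm hij]
  -- similarity
  set S := b0.toMatrix b with hS
  set S' := b.toMatrix b0 with hS'
  have h1 : S * S' = 1 := Basis.toMatrix_mul_toMatrix_flip b0 b
  have h2 : S' * S = 1 := Basis.toMatrix_mul_toMatrix_flip b b0
  have hsim : P = S * Matrix.diagonal d * S' := by
    rw [hS, hS', ← hfD]
    rw [basis_toMatrix_mul_linearMap_toMatrix_mul_basis_toMatrix]
    exact hfP.symm
  have hsim' : Matrix.diagonal d = S' * P * S := by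
    rw [hsim]
    have hcalc : S' * (S * Matrix.diagonal d * S') * S = Matrix.diagonal d := by
      calc S' * (S * Matrix.diagonal d * S') * S
          = (S' * S) * Matrix.diagonal d * (S' * S) := by noncomm_ring
        _ = Matrix.diagonal d := by rw [h2]; noncomm_ring
    exact hcalc.symm
  -- charpoly
  have hcp : P.charpoly = (Matrix.diagonal d).charpoly := by
    rw [← hfP, ← hfD, LinearMap.charpoly_toMatrix, LinearMap.charpoly_toMatrix]
  have hmult : ∀ lam : ℂ, P.charpoly.rootMultiplicity lam =
      (Finset.univ.filter (fun i => d i = lam)).card := by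
    intro lam
    rw [hcp, rootMult_diag]
  constructor
  · rintro ⟨A, hA⟩ lam
    rw [hmult lam]
    have := one_dir S' S (Matrix.diagonal d) P h2 h1 hsim' ⟨A, hA⟩
    obtain ⟨B, hB⟩ := this
    exact forward_diag d B hB lam
  · intro h
    apply one_dir S S' P (Matrix.diagonal d) h1 h2 hsim
    apply reverse_diag hM d
    intro lam
    rw [← hmult lam]
    exact h lam


end CommProof

open scoped Matrix

/-- Let `M ≥ 1` and let `P` be an `M × M` unitary complex matrix. There
exists a matrix `A` such that `A*P - P*A` is invertible if and only if no eigenvalue of `P`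
has algebraic multiplicity exceeding `⌊M/2⌋`. -/
theorem exists_commutator_invertible_iff_multiplicity_le
    (M : ℕ) (hM : 1 ≤ M) (P : Matrix (Fin M) (Fin M) ℂ) (hP : P * Pᴴ = 1) :
    (∃ A : Matrix (Fin M) (Fin M) ℂ, IsUnit (A * P - P * A)) ↔
      ∀ lam : ℂ, (Matrix.charpoly P).rootMultiplicity lam ≤ M / 2 := by
  exact CommProof.main M hM P hP
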